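/- For the instance J_p, in every feasible preemptive two-machine schedule the following lower bound on the start time of a_4^p holds: start(a_4^p) ≥ 2p + 2 − 1/2^{p+1}. This follows because the total work that must execute in the interval [2p, start(a_4^p)] is at least 4 − 1/2^p and at most two machines are available. -/

import Mathlib

open MeasureTheory

/-- Jobs of the instance `J_p`: the job `(i, j)` is `a_{j+1}^i`, a unit job; in
particular `(i, 3)` is the job `a_4^i`. -/
abbrev JobP (p : ℕ) := Fin (p + 1) × Fin 4

/-- Release dates: `r(a_j^i) = 2i` for `j ∈ {1,2,3}` and `r(a_4^i) = 2i + 1`. -/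
def relDate {p : ℕ} (a : JobP p) : ℝ :=
  if a.2 = 3 then 2 * ((a.1 : ℕ) : ℝ) + 1 else 2 * ((a.1 : ℕ) : ℝ)

/-- Precedences: `a_j^i ≺ a_4^i` for `j ∈ {1,2,3}` and `a_4^i ≺ a_4^(i+1)`. -/
def Prec {p : ℕ} (a b : JobP p) : Prop :=
  (a.1 = b.1 ∧ a.2 ≠ 3 ∧ b.2 = 3) ∨ (a.2 = 3 ∧ b.2 = 3 ∧ (a.1 : ℕ) + 1 = (b.1 : ℕ))

/-- A feasible preemptive two-machine schedule of `J_p`: `S a` is the set of times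
at which the unit job `a` executes; release dates are respected, each job executes
for total time `1`, at most two jobs execute at any instant, and no job executes
before one of its predecessors has completed. -/
def FeasibleP {p : ℕ} (S : JobP p → Set ℝ) : Prop :=
  (∀ a, MeasurableSet (S a)) ∧
  (∀ a, S a ⊆ Set.Ici (relDate a)) ∧
  (∀ a, volume (S a) = 1) ∧
  (∀ t : ℝ, {a | t ∈ S a}.ncard ≤ 2) ∧
  (∀ a b, Prec a b → ∀ s ∈ S a, ∀ t ∈ S b, s ≤ t)

open scoped ENNReal

lemma capacity {ι : Type*} [Fintype ι] (A : ι → Set ℝ)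
    (hm : ∀ a, MeasurableSet (A a))
    (hc : ∀ t : ℝ, {a | t ∈ A a}.ncard ≤ 2)
    (I : Set ℝ) :
    ∑ a : ι, volume (A a ∩ I) ≤ 2 * volume I := by
  classical
  have h1 : ∀ a : ι, volume (A a ∩ I) = ∫⁻ t in I, (A a).indicator 1 t := by
    intro a
    rw [lintegral_indicator_one (hm a), Measure.restrict_apply (hm a)]
  calc ∑ a : ι, volume (A a ∩ I) = ∫⁻ t in I, ∑ a : ι, (A a).indicator 1 t := by
        rw [lintegral_finset_sum]
        · simp [h1]
        · exact fun a _ => measurable_one.indicator (hm a)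
    _ ≤ ∫⁻ _ in I, 2 := by
        apply lintegral_mono
        intro t
        have h2 : ∑ a : ι, (A a).indicator (1 : ℝ → ℝ≥0∞) t
            = ((Finset.univ.filter (fun a => t ∈ A a)).card : ℝ≥0∞) := by
          rw [Finset.card_filter]
          push_cast
          simp [Set.indicator_apply]
        have h3 : (Finset.univ.filter (fun a => t ∈ A a)).card = {a | t ∈ A a}.ncard := by
          rw [Set.ncard_eq_toFinset_card']
          congr 1
          ext a
          simp
        simp only [h2, h3]
        have h4 := hc t
        exact_mod_cast h4
    _ = 2 * volume I := setLIntegral_const I 2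

lemma ofReal_le_ofReal_imp {c y : ℝ} (hy : 0 ≤ y)
    (h : ENNReal.ofReal c ≤ ENNReal.ofReal y) : c ≤ y :=
  (ENNReal.ofReal_le_ofReal_iff hy).mp h


lemma key (p : ℕ) (S : JobP p → Set ℝ) (hS : FeasibleP S) :
    ∀ i (hi : i < p + 1),
      2 * (i : ℝ) + 2 - 1 / 2 ^ (i + 1) ≤ sInf (S (⟨i, hi⟩, 3)) := by
  obtain ⟨hmeas, hrel, hvol, hcap, hprec⟩ := hS
  have hne : ∀ a, (S a).Nonempty := by
    intro a
    rcases Set.eq_empty_or_nonempty (S a) with h | h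
    · exfalso; have := hvol a; rw [h] at this; simp at this
    · exact h
  -- generic facts for index i
  have hsub : ∀ (i : ℕ) (hi : i < p + 1) (j : Fin 4), j ≠ 3 →
      S (⟨i, hi⟩, j) ⊆ Set.Icc (2 * (i:ℝ)) (sInf (S (⟨i, hi⟩, 3))) := by
    intro i hi j hj s hs
    constructor
    · have := hrel (⟨i, hi⟩, j) hs
      simpa [relDate, hj] using this
    · apply le_csInf (hne _)
      intro t ht
      exact hprec (⟨i, hi⟩, j) (⟨i, hi⟩, 3) (Or.inl ⟨rfl, hj, rfl⟩) s hs t ht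
  have hv : ∀ (i : ℕ) (hi : i < p + 1) (j : Fin 4), j ≠ 3 →
      volume (S (⟨i, hi⟩, j) ∩ Set.Icc (2 * (i:ℝ)) (sInf (S (⟨i, hi⟩, 3)))) = 1 := by
    intro i hi j hj
    rw [Set.inter_eq_self_of_subset_left (hsub i hi j hj)]
    exact hvol _
  have hrelT : ∀ (i : ℕ) (hi : i < p + 1),
      2 * (i:ℝ) + 1 ≤ sInf (S (⟨i, hi⟩, 3)) := by
    intro i hi
    apply le_csInf (hne _)
    intro t ht
    have := hrel (⟨i, hi⟩, 3) ht
    simpa [relDate] using this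
  intro i
  induction i with
  | zero =>
    intro hi
    set T := sInf (S (⟨0, hi⟩, 3)) with hTdef
    have hT1 : (1 : ℝ) ≤ T := by simpa [hTdef] using hrelT 0 hi
    set I : Set ℝ := Set.Icc (2 * ((0:ℕ):ℝ)) T with hIdef
    have hsum : ENNReal.ofReal 3 ≤ 2 * volume I := by
      have hcap2 := capacity S hmeas hcap I
      have hle : ∑ a ∈ ({(⟨0, hi⟩, 0), (⟨0, hi⟩, 1), (⟨0, hi⟩, 2)} :
          Finset (JobP p)), volume (S a ∩ I)
          ≤ ∑ a : JobP p, volume (S a ∩ I) :=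
        Finset.sum_le_sum_of_subset (Finset.subset_univ _)
      rw [Finset.sum_insert (by simp [Prod.ext_iff]),
        Finset.sum_insert (by simp [Prod.ext_iff]),
        Finset.sum_singleton] at hle
      rw [hv 0 hi 0 (by decide), hv 0 hi 1 (by decide), hv 0 hi 2 (by decide)] at hle
      calc ENNReal.ofReal 3 = 1 + (1 + 1) := by norm_num
        _ ≤ ∑ a : JobP p, volume (S a ∩ I) := hle
        _ ≤ 2 * volume I := hcap2
    rw [hIdef, Real.volume_Icc,
      show (2:ℝ≥0∞) = ENNReal.ofReal 2 by simp,
      ← ENNReal.ofReal_mul (by norm_num)] at hsum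
    have h3 : (3:ℝ) ≤ 2 * (T - 2 * ((0:ℕ):ℝ)) :=
      ofReal_le_ofReal_imp (by push_cast; linarith) hsum
    push_cast at h3 ⊢
    linarith
  | succ i IH =>
    intro hi
    have hi' : i < p + 1 := Nat.lt_of_succ_lt hi
    have IH' := IH hi'
    set T' := sInf (S (⟨i, hi'⟩, 3)) with hT'def
    set T := sInf (S (⟨i + 1, hi⟩, 3)) with hTdef
    have hT1 : 2 * ((i:ℝ) + 1) + 1 ≤ T := by
      have := hrelT (i + 1) hi
      push_cast at this
      linarith
    set I : Set ℝ := Set.Icc (2 * (((i + 1 : ℕ)):ℝ)) T with hIdef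
    -- the previous a_4 job is contained in [T', T]
    have hprev : S (⟨i, hi'⟩, 3) ⊆ Set.Icc T' T := by
      intro s hs
      constructor
      · exact csInf_le ⟨relDate (⟨i, hi'⟩, 3), fun x hx => hrel _ hx⟩ hs
      · apply le_csInf (hne _)
        intro t ht
        exact hprec (⟨i, hi'⟩, 3) (⟨i + 1, hi⟩, 3)
          (Or.inr ⟨rfl, rfl, by simp⟩) s hs t ht
    -- the part of the previous a_4 job outside I is small
    have hout : volume (S (⟨i, hi'⟩, 3) \ I) ≤ ENNReal.ofReal (1 / 2 ^ (i + 1)) := by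
      have hss : S (⟨i, hi'⟩, 3) \ I ⊆ Set.Ico T' (2 * (((i + 1 : ℕ)):ℝ)) := by
        rintro s ⟨hs, hs2⟩
        obtain ⟨h1, h2⟩ := hprev hs
        rw [hIdef, Set.mem_Icc] at hs2
        push_neg at hs2
        constructor
        · exact h1
        · by_contra hcon
          push_neg at hcon
          exact absurd (hs2 hcon) (not_lt.mpr h2)
      calc volume (S (⟨i, hi'⟩, 3) \ I) ≤ volume (Set.Ico T' (2 * (((i + 1 : ℕ)):ℝ))) :=
            measure_mono hss
        _ = ENNReal.ofReal (2 * (((i + 1 : ℕ)):ℝ) - T') := Real.volume_Ico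
        _ ≤ ENNReal.ofReal (1 / 2 ^ (i + 1)) := by
            apply ENNReal.ofReal_le_ofReal
            push_cast
            push_cast at IH'
            linarith
    have hin : (1:ℝ≥0∞) ≤ volume (S (⟨i, hi'⟩, 3) ∩ I) + ENNReal.ofReal (1 / 2 ^ (i + 1)) := by
      calc (1:ℝ≥0∞) = volume (S (⟨i, hi'⟩, 3)) := (hvol _).symm
        _ ≤ volume (S (⟨i, hi'⟩, 3) ∩ I) + volume (S (⟨i, hi'⟩, 3) \ I) := by
            rw [← measure_inter_add_diff _ (measurableSet_Icc : MeasurableSet I)]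
        _ ≤ _ := add_le_add_right hout _
    have hsum : (3:ℝ≥0∞) + volume (S (⟨i, hi'⟩, 3) ∩ I) ≤ 2 * volume I := by
      have hcap2 := capacity S hmeas hcap I
      have hle : ∑ a ∈ ({(⟨i + 1, hi⟩, 0), (⟨i + 1, hi⟩, 1), (⟨i + 1, hi⟩, 2),
          (⟨i, hi'⟩, 3)} : Finset (JobP p)), volume (S a ∩ I)
          ≤ ∑ a : JobP p, volume (S a ∩ I) :=
        Finset.sum_le_sum_of_subset (Finset.subset_univ _)
      rw [Finset.sum_insert (by simp [Prod.ext_iff, Fin.ext_iff]),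
        Finset.sum_insert (by simp [Prod.ext_iff, Fin.ext_iff]),
        Finset.sum_insert (by simp [Prod.ext_iff, Fin.ext_iff]),
        Finset.sum_singleton] at hle
      rw [hv (i+1) hi 0 (by decide), hv (i+1) hi 1 (by decide),
        hv (i+1) hi 2 (by decide)] at hle
      calc (3:ℝ≥0∞) + volume (S (⟨i, hi'⟩, 3) ∩ I)
          = 1 + (1 + (1 + volume (S (⟨i, hi'⟩, 3) ∩ I))) := by ring
        _ ≤ ∑ a : JobP p, volume (S a ∩ I) := hle
        _ ≤ 2 * volume I := hcap2
    -- combine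
    have hfinal : ENNReal.ofReal 4 ≤
        ENNReal.ofReal (2 * (T - 2 * (((i + 1 : ℕ)):ℝ)) + 1 / 2 ^ (i + 1)) := by
      have h4 : (3:ℝ≥0∞) + 1 ≤ 2 * volume I + ENNReal.ofReal (1 / 2 ^ (i + 1)) := by
        calc (3:ℝ≥0∞) + 1 ≤ (3:ℝ≥0∞) + (volume (S (⟨i, hi'⟩, 3) ∩ I)
              + ENNReal.ofReal (1 / 2 ^ (i + 1))) := by
              exact add_le_add_right hin _
          _ = ((3:ℝ≥0∞) + volume (S (⟨i, hi'⟩, 3) ∩ I)) + ENNReal.ofReal (1 / 2 ^ (i + 1)) := by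
              ring
          _ ≤ 2 * volume I + ENNReal.ofReal (1 / 2 ^ (i + 1)) := add_le_add_left hsum _
      rw [hIdef, Real.volume_Icc,
        show (2:ℝ≥0∞) = ENNReal.ofReal 2 by simp,
        ← ENNReal.ofReal_mul (by norm_num),
        ← ENNReal.ofReal_add (by push_cast; linarith) (by positivity)] at h4
      calc ENNReal.ofReal 4 = (3:ℝ≥0∞) + 1 := by norm_num
        _ ≤ _ := h4
    have hp2 : (0:ℝ) < 2 ^ (i + 1) := by positivity
    have hd : (0:ℝ) < 1 / 2 ^ (i + 1) := by positivity
    have h5 : (4:ℝ) ≤ 2 * (T - 2 * (((i + 1 : ℕ)):ℝ)) + 1 / 2 ^ (i + 1) :=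
      ofReal_le_ofReal_imp (by push_cast; linarith) hfinal
    push_cast at h5 ⊢
    have hpow : (2:ℝ) ^ (i + 1 + 1) = 2 * 2 ^ (i + 1) := by ring
    rw [hpow]
    have heq : (1:ℝ) / (2 * 2 ^ (i + 1)) * 2 = 1 / 2 ^ (i + 1) := by
      field_simp
    linarith

/-- In any feasible preemptive two-machine schedule of `J_p`, the job `a_4^p`
starts no earlier than `2p + 2 - 1/2^(p+1)`. -/
theorem a4p_start_lower_bound (p : ℕ) (S : JobP p → Set ℝ) (hS : FeasibleP S) :
    2 * (p : ℝ) + 2 - 1 / 2 ^ (p + 1) ≤ sInf (S (Fin.last p, 3)) := by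
  have := key p S hS p (Nat.lt_succ_self p)
  simpa [Fin.last] using this
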